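/- Let A, B ∈ ℝ^{m×n} have full column rank, and suppose the columns of [(Z^A)ᵀ, (Z^B)ᵀ]ᵀ form a basis for the null space of [A, B]. Then Z^A and Z^B each have full column rank. -/

import Mathlib

open Matrix

lemma inj_of_rank_eq {m n : ℕ} (A : Matrix (Fin m) (Fin n) ℝ) (hA : A.rank = n) :
    Function.Injective A.mulVecLin := by
  rw [← LinearMap.ker_eq_bot]
  have h := A.mulVecLin.finrank_range_add_finrank_ker
  rw [show Module.finrank ℝ ↥(LinearMap.range A.mulVecLin) = A.rank from rfl, hA,
    Module.finrank_pi, Fintype.card_fin] at h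
  have : Module.finrank ℝ (LinearMap.ker A.mulVecLin) = 0 := by omega
  exact Submodule.finrank_eq_zero.mp this

/-- If `A, B ∈ ℝ^{m×n}` have full column rank and the columns of
`[(Z^A)ᵀ, (Z^B)ᵀ]ᵀ` form a basis of the null space of `[A, B]`, then `Z^A` and `Z^B`
each have full column rank. -/
theorem stmt_6 (m n l : ℕ) (A B : Matrix (Fin m) (Fin n) ℝ)
    (hA : A.rank = n) (hB : B.rank = n)
    (ZA ZB : Matrix (Fin n) (Fin l) ℝ)
    (hindep : Function.Injective (Matrix.fromRows ZA ZB).mulVecLin)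
    (hspan : LinearMap.range (Matrix.fromRows ZA ZB).mulVecLin =
      LinearMap.ker (Matrix.fromCols A B).mulVecLin) :
    ZA.rank = l ∧ ZB.rank = l := by
  have hAinj := inj_of_rank_eq A hA
  have hBinj := inj_of_rank_eq B hB
  have key : ∀ x : Fin l → ℝ,
      A *ᵥ (ZA *ᵥ x) + B *ᵥ (ZB *ᵥ x) = 0 := by
    intro x
    have hmem : (Matrix.fromRows ZA ZB).mulVecLin x ∈
        LinearMap.ker (Matrix.fromCols A B).mulVecLin := by
      rw [← hspan]; exact ⟨x, rfl⟩
    have := LinearMap.mem_ker.mp hmem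
    rwa [mulVecLin_apply, mulVecLin_apply, fromRows_mulVec,
      fromCols_mulVec_sumElim] at this
  have hZAinj : Function.Injective ZA.mulVecLin := by
    rw [← LinearMap.ker_eq_bot, LinearMap.ker_eq_bot']
    intro x hx
    rw [mulVecLin_apply] at hx
    have h1 := key x
    rw [hx, Matrix.mulVec_zero, zero_add] at h1
    have hZB : ZB *ᵥ x = 0 := by
      have : B.mulVecLin (ZB *ᵥ x) = B.mulVecLin 0 := by
        simpa [mulVecLin_apply] using h1
      exact hBinj this
    have : (Matrix.fromRows ZA ZB).mulVecLin x = (Matrix.fromRows ZA ZB).mulVecLin 0 := by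
      simp [mulVecLin_apply, fromRows_mulVec, hx, hZB]
    exact hindep this
  have hZBinj : Function.Injective ZB.mulVecLin := by
    rw [← LinearMap.ker_eq_bot, LinearMap.ker_eq_bot']
    intro x hx
    rw [mulVecLin_apply] at hx
    have h1 := key x
    rw [hx, Matrix.mulVec_zero, add_zero] at h1
    have hZA : ZA *ᵥ x = 0 := by
      have : A.mulVecLin (ZA *ᵥ x) = A.mulVecLin 0 := by
        simpa [mulVecLin_apply] using h1
      exact hAinj this
    have : (Matrix.fromRows ZA ZB).mulVecLin x = (Matrix.fromRows ZA ZB).mulVecLin 0 := by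
      simp [mulVecLin_apply, fromRows_mulVec, hx, hZA]
    exact hindep this
  constructor
  · rw [Matrix.rank, LinearMap.finrank_range_of_inj hZAinj, Module.finrank_pi, Fintype.card_fin]
  · rw [Matrix.rank, LinearMap.finrank_range_of_inj hZBinj, Module.finrank_pi, Fintype.card_fin]
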